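/- Let q ≥ 2 be a squarefree integer and let a, b be positive integers, and set α = (a·√q + b)². Then α is irrational, α > 1, and the multiplicative submonoid B of ℝ generated by {(p² : ℝ) : p prime} ∪ {α} satisfies |x − y| ≥ 1 for all distinct x, y ∈ B. (In particular, there are infinitely many non-integer reals α > 1 for which adjoining α to the squares of the primes yields a 1-separated set of Beurling integers.) -/

import Mathlib

/-- **Theorem 4 (Ruzsa), first part.** For a squarefree integer `q ≥ 2` and positive
integers `a, b`, the number `α = (a√q + b)²` is irrational, exceeds `1`, and the
multiplicative monoid generated by the prime squares together with `α` is `1`-separated. -/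
theorem stmt_3 (q : ℕ) (hq2 : 2 ≤ q) (hq : Squarefree q) (a b : ℕ) (ha : 0 < a) (hb : 0 < b)
    (α : ℝ) (hα : α = ((a : ℝ) * Real.sqrt q + (b : ℝ)) ^ 2) :
    Irrational α ∧ 1 < α ∧
      ∀ x ∈ Submonoid.closure ({x : ℝ | ∃ p : ℕ, p.Prime ∧ x = (p : ℝ) ^ 2} ∪ {α}),
        ∀ y ∈ Submonoid.closure ({x : ℝ | ∃ p : ℕ, p.Prime ∧ x = (p : ℝ) ^ 2} ∪ {α}),
          x ≠ y → 1 ≤ |x - y| := by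
  set s : ℝ := Real.sqrt q with hs_def
  have hqpos : (0:ℝ) < q := by positivity
  have hspos : 0 < s := Real.sqrt_pos.mpr hqpos
  have hs2 : s ^ 2 = q := Real.sq_sqrt hqpos.le
  -- irrationality of √q
  have hnsq : ¬ IsSquare q := by
    intro ⟨r, hr⟩
    have : IsUnit r := hq r (hr ▸ dvd_refl _)
    have hr1 : r = 1 := Nat.isUnit_iff.mp this
    rw [hr1] at hr
    omega
  have hsirr : Irrational s := irrational_sqrt_natCast_iff.mpr hnsq
  -- if u + v√q = 0 with u v : ℤ then u = v = 0
  have hzero : ∀ u v : ℤ, (u:ℝ) + v * s = 0 → u = 0 ∧ v = 0 := by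
    intro u v huv
    rcases eq_or_ne v 0 with hv | hv
    · subst hv
      simp only [Int.cast_zero, zero_mul, add_zero] at huv
      exact ⟨by exact_mod_cast huv, rfl⟩
    · exfalso
      apply hsirr
      refine ⟨(-u / v : ℚ), ?_⟩
      have hv' : (v:ℝ) ≠ 0 := Int.cast_ne_zero.mpr hv
      push_cast
      field_simp
      linarith
  -- norm lower bound
  have hnorm : ∀ U V : ℤ, ¬ (U = 0 ∧ V = 0) →
      (1:ℝ) ≤ |(U:ℝ) + V * s| * |(U:ℝ) - V * s| := by
    intro U V hUV
    have hprod : ((U:ℝ) + V * s) * ((U:ℝ) - V * s) = ((U^2 - q * V^2 : ℤ) : ℝ) := by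
      push_cast
      linear_combination (-(V:ℝ)^2) * hs2
    have hne : (U^2 - q * V^2 : ℤ) ≠ 0 := by
      intro h0
      have h0' : ((U:ℝ) + V * s) * ((U:ℝ) - V * s) = 0 := by rw [hprod, h0]; simp
      rcases mul_eq_zero.mp h0' with h | h
      · exact hUV (hzero U V h)
      · have := hzero U (-V) (by push_cast; linarith)
        exact hUV ⟨this.1, by omega⟩
    have : (1:ℝ) ≤ |((U^2 - q * V^2 : ℤ) : ℝ)| := by
      rw [← Int.cast_abs]
      exact_mod_cast Int.one_le_abs (by omega)
    calc (1:ℝ) ≤ |((U^2 - q * V^2 : ℤ) : ℝ)| := this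
      _ = |(U:ℝ) + V * s| * |(U:ℝ) - V * s| := by rw [← hprod, abs_mul]
  -- structure of elements of the closure
  set P : ℝ → Prop := fun x => ∃ u v : ℤ,
    0 < (u:ℝ) + v * s ∧ |(u:ℝ) - v * s| ≤ (u:ℝ) + v * s ∧ x = ((u:ℝ) + v * s) ^ 2 with hP
  have hclos : ∀ x ∈ Submonoid.closure ({x : ℝ | ∃ p : ℕ, p.Prime ∧ x = (p : ℝ) ^ 2} ∪ {α}),
      P x := by
    intro x hx
    induction hx using Submonoid.closure_induction with
    | mem x hxmem =>
      rcases hxmem with ⟨p, hp, rfl⟩ | hxα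
      · refine ⟨(p:ℤ), 0, ?_, ?_, by push_cast; ring⟩
        · simp only [Int.cast_natCast, Int.cast_zero, zero_mul, add_zero]
          exact_mod_cast hp.pos
        · simp
      · refine ⟨(b:ℤ), (a:ℤ), ?_, ?_, ?_⟩
        · push_cast; positivity
        · push_cast
          rw [abs_le]
          constructor <;> nlinarith [Real.sqrt_nonneg (q:ℝ), (by exact_mod_cast hb : (0:ℝ) < b),
            (by exact_mod_cast ha : (0:ℝ) < a)]
        · simp only [Set.mem_singleton_iff] at hxα
          rw [hxα, hα]; push_cast; ring
    | one => exact ⟨1, 0, by norm_num, by norm_num, by norm_num⟩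
    | mul x y hx hy ihx ihy =>
      obtain ⟨u, v, hpos, hconj, rfl⟩ := ihx
      obtain ⟨u', v', hpos', hconj', rfl⟩ := ihy
      refine ⟨u * u' + q * (v * v'), u * v' + u' * v, ?_, ?_, ?_⟩
      · have h1 : ((u * u' + q * (v * v') : ℤ) : ℝ) + (u * v' + u' * v : ℤ) * s
            = ((u:ℝ) + v * s) * ((u':ℝ) + v' * s) := by push_cast; linear_combination (-(v:ℝ) * v') * hs2
        rw [h1]; positivity
      · have h1 : ((u * u' + q * (v * v') : ℤ) : ℝ) + (u * v' + u' * v : ℤ) * s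
            = ((u:ℝ) + v * s) * ((u':ℝ) + v' * s) := by push_cast; linear_combination (-(v:ℝ) * v') * hs2
        have h2 : ((u * u' + q * (v * v') : ℤ) : ℝ) - (u * v' + u' * v : ℤ) * s
            = ((u:ℝ) - v * s) * ((u':ℝ) - v' * s) := by push_cast; linear_combination (-(v:ℝ) * v') * hs2
        rw [h1, h2, abs_mul]
        exact mul_le_mul hconj hconj' (abs_nonneg _) hpos.le
      · have h1 : ((u * u' + q * (v * v') : ℤ) : ℝ) + (u * v' + u' * v : ℤ) * s
            = ((u:ℝ) + v * s) * ((u':ℝ) + v' * s) := by push_cast; linear_combination (-(v:ℝ) * v') * hs2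
        rw [h1]; ring
  refine ⟨?_, ?_, ?_⟩
  · -- irrationality of α
    have h1 : α = ((a^2 * q + b^2 : ℤ) : ℝ) + ((2 * a * b : ℤ) : ℝ) * s := by
      rw [hα]; push_cast; linear_combination (a:ℝ)^2 * hs2
    have h2 : Irrational (((2 * a * b : ℤ) : ℝ) * s) :=
      hsirr.intCast_mul (by positivity)
    have := h2.intCast_add (a^2 * q + b^2 : ℤ)
    rwa [← h1] at this
  · -- 1 < α
    rw [hα]
    have h1 : (1:ℝ) < (a:ℝ) * s + b := by
      have : (1:ℝ) ≤ (b:ℝ) := by exact_mod_cast hb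
      nlinarith [hspos, (by exact_mod_cast ha : (0:ℝ) < a)]
    nlinarith
  · -- 1-separation
    intro x hx y hy hxy
    obtain ⟨u, v, hpos, hconj, rfl⟩ := hclos x hx
    obtain ⟨u', v', hpos', hconj', rfl⟩ := hclos y hy
    set γ : ℝ := (u:ℝ) + v * s
    set δ : ℝ := (u':ℝ) + v' * s
    have hγδ : γ ≠ δ := fun h => hxy (by rw [h])
    have hne : ¬ (u - u' = 0 ∧ v - v' = 0) := by
      rintro ⟨h1, h2⟩
      apply hγδ
      have : u = u' := by omega
      have h2' : v = v' := by omega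
      simp [γ, δ, this, h2']
    have hN : (1:ℝ) ≤ |((u - u' : ℤ) : ℝ) + (v - v' : ℤ) * s| *
        |((u - u' : ℤ) : ℝ) - (v - v' : ℤ) * s| := hnorm _ _ hne
    have e1 : ((u - u' : ℤ) : ℝ) + (v - v' : ℤ) * s = γ - δ := by push_cast; ring
    have e2 : ((u - u' : ℤ) : ℝ) - (v - v' : ℤ) * s = ((u:ℝ) - v * s) - ((u':ℝ) - v' * s) := by
      push_cast; ring
    rw [e1, e2] at hN
    have key : |((u:ℝ) - v * s) - ((u':ℝ) - v' * s)| ≤ γ + δ := by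
      calc |((u:ℝ) - v * s) - ((u':ℝ) - v' * s)|
          ≤ |(u:ℝ) - v * s| + |(u':ℝ) - v' * s| := abs_sub _ _
        _ ≤ γ + δ := add_le_add hconj hconj'
    have hsum : 0 < γ + δ := by linarith
    have e3 : γ ^ 2 - δ ^ 2 = (γ - δ) * (γ + δ) := by ring
    rw [e3, abs_mul]
    have habs : |γ + δ| = γ + δ := abs_of_pos hsum
    rw [habs]
    calc (1:ℝ) ≤ |γ - δ| * |((u:ℝ) - v * s) - ((u':ℝ) - v' * s)| := hN
      _ ≤ |γ - δ| * (γ + δ) := mul_le_mul_of_nonneg_left key (abs_nonneg _)
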